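/- Let b be a positive integer, m, a ∈ ℤ, and σ ∈ {1, -1}. Set τ(u) = (b/(2πi))·log u for u in the punctured unit disc Δ* (principal branch of log), so that Im(τ(u)) = -(b/(2π))·log|u| > 0. Let h : Δ → ℂ be continuous on the open unit disc Δ, and define s(u) = h(u) + (a/(2πi))·log u for u ∈ Δ*. Then there exists a continuous function h' : Δ → ℂ such that for all u ∈ Δ*: σ·s(u) + m·Im(s(u))/Im(τ(u)) = h'(u) + σ·(a/(2πi))·log u. Moreover one can take h'(u) = σ·h(u) + m·a/b + m·Im(h(u))/Im(τ(u)) for u ≠ 0 and h'(0) = σ·h(0) + m·a/b. -/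

import Mathlib

open Complex

lemma im_cdiv_mul_log (c : ℝ) (u : ℂ) :
    ((c:ℂ)/(2*Real.pi*Complex.I) * Complex.log u).im
      = -(c/(2*Real.pi)) * Real.log (‖u‖) := by
  have h1 : (c:ℂ)/(2*Real.pi*Complex.I) = (-(c/(2*Real.pi)) : ℝ) * Complex.I := by
    have hπ : (Real.pi:ℂ) ≠ 0 := by exact_mod_cast Real.pi_ne_zero
    field_simp
    ring_nf
    rw [Complex.I_sq]
    push_cast
    field_simp
  rw [h1]
  simp only [Complex.mul_im, Complex.mul_re, Complex.ofReal_re, Complex.ofReal_im,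
    Complex.I_re, Complex.I_im, Complex.log_re, mul_zero, zero_mul, mul_one,
    add_zero, zero_add, neg_zero, sub_zero, zero_sub]


/-- The fibrewise mapping-class transformation
`v ↦ σ·v + m·Im(v)/Im(τ(u))` maps sections of the form `u ↦ h(u) + (a/(2πi))·log u`
(with `h` continuous on the unit disc) to sections of the same form: there is a
continuous `h'` with `σ·s(u) + m·Im(s(u))/Im(τ(u)) = h'(u) + σ·(a/(2πi))·log u` on the
punctured disc, and one may take
`h'(u) = σ·h(u) + m·a/b + m·Im(h(u))/Im(τ(u))` for `u ≠ 0`, `h'(0) = σ·h(0) + m·a/b`. -/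
theorem mapping_class_preserves_sections (b : ℕ) (hb : 0 < b) (m a : ℤ)
    (σ : ℤ) (hσ : σ = 1 ∨ σ = -1) (τ : ℂ → ℂ)
    (hτ : ∀ u : ℂ, τ u = (b : ℂ) / (2 * Real.pi * Complex.I) * Complex.log u)
    (h : ℂ → ℂ) (hcont : ContinuousOn h {u : ℂ | ‖u‖ < 1})
    (s : ℂ → ℂ)
    (hs : ∀ u : ℂ, s u = h u + (a : ℂ) / (2 * Real.pi * Complex.I) * Complex.log u) :
    ∃ h' : ℂ → ℂ, ContinuousOn h' {u : ℂ | ‖u‖ < 1} ∧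
      (∀ u : ℂ, 0 < ‖u‖ → ‖u‖ < 1 →
        (σ : ℂ) * s u + (((m : ℝ) * (s u).im / (τ u).im : ℝ) : ℂ)
          = h' u + (σ : ℂ) * ((a : ℂ) / (2 * Real.pi * Complex.I)) * Complex.log u) ∧
      (∀ u : ℂ, 0 < ‖u‖ → ‖u‖ < 1 →
        h' u = (σ : ℂ) * h u + (m : ℂ) * (a : ℂ) / (b : ℂ)
          + (((m : ℝ) * (h u).im / (τ u).im : ℝ) : ℂ)) ∧
      h' 0 = (σ : ℂ) * h 0 + (m : ℂ) * (a : ℂ) / (b : ℂ) := by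
  have hπ : Real.pi ≠ 0 := Real.pi_ne_zero
  have hbR : (b:ℝ) ≠ 0 := by positivity
  set D : ℂ → ℝ := fun u => -((b:ℝ)/(2*Real.pi)) * Real.log (‖u‖) with hD
  have hτim : ∀ u : ℂ, (τ u).im = D u := by
    intro u
    rw [hτ u, show ((b:ℕ):ℂ) = (((b:ℝ)):ℂ) from by norm_cast]
    exact im_cdiv_mul_log (b:ℝ) u
  have hsim : ∀ u : ℂ, (s u).im = (h u).im + -((a:ℝ)/(2*Real.pi)) * Real.log (‖u‖) := by
    intro u
    rw [hs u, Complex.add_im, show ((a:ℤ):ℂ) = (((a:ℝ)):ℂ) from by norm_cast,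
      im_cdiv_mul_log (a:ℝ) u]
  have hL : ∀ u : ℂ, 0 < ‖u‖ → ‖u‖ < 1 → Real.log (‖u‖) < 0 :=
    fun u h0 h1 => Real.log_neg h0 h1
  have hDne : ∀ u : ℂ, 0 < ‖u‖ → ‖u‖ < 1 → D u ≠ 0 := by
    intro u h0 h1
    have := hL u h0 h1
    simp only [hD]
    intro hc
    have hb' : (0:ℝ) < (b:ℝ) := by exact_mod_cast hb
    rcases mul_eq_zero.1 hc with h' | h'
    · rw [neg_eq_zero] at h'
      exact absurd h' (ne_of_gt (div_pos hb' (by positivity)))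
    · exact absurd h' (ne_of_lt this)
  refine ⟨fun u => (σ:ℂ) * h u + (m:ℂ) * (a:ℂ) / (b:ℂ)
      + (((m:ℝ) * (h u).im / D u : ℝ) : ℂ), ?_, ?_, ?_, ?_⟩
  · -- continuity
    have hg : ContinuousOn (fun u : ℂ => (m:ℝ) * (h u).im / D u) {u : ℂ | ‖u‖ < 1} := by
      intro x hx
      by_cases hx0 : x = 0
      · subst hx0
        have hg0 : (m:ℝ) * (h 0).im / D 0 = 0 := by
          simp [hD]
        rw [ContinuousWithinAt, hg0]
        have hsub : {u : ℂ | ‖u‖ < 1} ⊆ ({u : ℂ | ‖u‖ < 1} \ {0}) ∪ {0} := by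
          intro y hy
          by_cases hy0 : y = 0
          · exact Or.inr hy0
          · exact Or.inl ⟨hy, hy0⟩
        refine Filter.Tendsto.mono_left ?_ ((nhdsWithin_mono 0 hsub).trans
          (le_of_eq (nhdsWithin_union 0 _ _)))
        rw [Filter.tendsto_sup]
        constructor
        · -- punctured part
          have hDtop : Filter.Tendsto D (nhdsWithin 0 ({u : ℂ | ‖u‖ < 1} \ {0})) Filter.atTop := by
            have hlog : Filter.Tendsto (fun u : ℂ => Real.log (‖u‖))
                (nhdsWithin 0 ({u : ℂ | ‖u‖ < 1} \ {0})) Filter.atBot := by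
              apply Real.tendsto_log_nhdsNE_zero.comp
              rw [tendsto_nhdsWithin_iff]
              constructor
              · simpa using ((continuous_norm (E := ℂ)).tendsto 0).mono_left nhdsWithin_le_nhds
              · filter_upwards [self_mem_nhdsWithin] with y hy
                simpa using norm_ne_zero_iff.mpr hy.2
            have hneg : -((b:ℝ)/(2*Real.pi)) < 0 := by
              have hb' : (0:ℝ) < (b:ℝ) := by exact_mod_cast hb
              have : (0:ℝ) < (b:ℝ)/(2*Real.pi) := div_pos hb' (by positivity)
              linarith
            exact (Filter.tendsto_const_mul_atTop_of_neg hneg).2 hlog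
          have hinv : Filter.Tendsto (fun u : ℂ => (D u)⁻¹)
              (nhdsWithin 0 ({u : ℂ | ‖u‖ < 1} \ {0})) (nhds 0) :=
            tendsto_inv_atTop_zero.comp hDtop
          have hnum : Filter.Tendsto (fun u : ℂ => (m:ℝ) * (h u).im)
              (nhdsWithin 0 ({u : ℂ | ‖u‖ < 1} \ {0})) (nhds ((m:ℝ) * (h 0).im)) := by
            have h0mem : (0:ℂ) ∈ {u : ℂ | ‖u‖ < 1} := by simp
            have := (Complex.continuous_im.continuousAt.comp_continuousWithinAt
              (hcont 0 h0mem)).const_smul (m:ℝ)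
            exact (this.mono_left (nhdsWithin_mono 0 Set.diff_subset))
          have := hnum.mul hinv
          rw [mul_zero] at this
          refine this.congr (fun y => by rw [div_eq_mul_inv])
        · -- pure part
          rw [nhdsWithin_singleton]
          have : (m:ℝ) * (h 0).im / D 0 = 0 := by simp [hD]
          rw [show (0:ℝ) = (m:ℝ) * (h 0).im / D 0 from this.symm]
          exact tendsto_pure_nhds _ 0
      · -- away from 0
        have habs : ‖x‖ ≠ 0 := by simpa using hx0
        have hax : 0 < ‖x‖ := lt_of_le_of_ne (norm_nonneg x) (Ne.symm habs)
        have hDc : ContinuousAt D x := by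
          have : ContinuousAt (fun u : ℂ => Real.log (‖u‖)) x :=
            (Real.continuousAt_log habs).comp continuous_norm.continuousAt
          exact this.const_smul (-((b:ℝ)/(2*Real.pi)))
        have hnum : ContinuousWithinAt (fun u : ℂ => (m:ℝ) * (h u).im)
            {u : ℂ | ‖u‖ < 1} x :=
          (Complex.continuous_im.continuousAt.comp_continuousWithinAt (hcont x hx)).const_smul (m:ℝ)
        exact hnum.div hDc.continuousWithinAt (hDne x hax hx)
    have : ContinuousOn (fun u : ℂ => (((m:ℝ) * (h u).im / D u : ℝ) : ℂ))
        {u : ℂ | ‖u‖ < 1} := Complex.continuous_ofReal.comp_continuousOn hg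
    exact ((continuousOn_const.mul hcont).add continuousOn_const).add this
  · intro u h0 h1
    have key : ((m:ℝ) * ((h u).im + -((a:ℝ)/(2*Real.pi)) * Real.log (‖u‖)) / D u : ℝ)
        = (m:ℝ) * (a:ℝ) / (b:ℝ) + (m:ℝ) * (h u).im / D u := by
      have hlog : Real.log (‖u‖) ≠ 0 := ne_of_lt (hL u h0 h1)
      have hne := hDne u h0 h1
      simp only [hD] at hne ⊢
      field_simp
      ring
    simp only [hτim, hsim]
    rw [key, hs u]
    push_cast
    ring
  · intro u h0 h1
    simp only [hτim]
  · simp only [hD]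
    norm_num
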